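/- With g = h ⊕ m a reductive decomposition, the induced products on m satisfy the derivation property [X,Y,U·V] = [X,Y,U]·V + U·[X,Y,V] for all X,Y,U,V ∈ m. -/

import Mathlib

theorem lie_yamaguti_LY5
    (k g : Type*) [Field k] [LieRing g] [LieAlgebra k g]
    (h : LieSubalgebra k g) (m : Submodule k g)
    (hc : IsCompl h.toSubmodule m)
    (hm : ∀ X ∈ h, ∀ Y ∈ m, ⁅X, Y⁆ ∈ m)
    (Pm : g →ₗ[k] g) (Ph : g →ₗ[k] g)
    (hPm : Pm = m.subtype ∘ₗ Submodule.linearProjOfIsCompl m h.toSubmodule hc.symm)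
    (hPh : Ph = h.toSubmodule.subtype ∘ₗ Submodule.linearProjOfIsCompl h.toSubmodule m hc)
    (X Y U V : g) (hX : X ∈ m) (hY : Y ∈ m) (hU : U ∈ m) (hV : V ∈ m) :
    ⁅Ph ⁅X, Y⁆, Pm ⁅U, V⁆⁆
      = Pm ⁅⁅Ph ⁅X, Y⁆, U⁆, V⁆ + Pm ⁅U, ⁅Ph ⁅X, Y⁆, V⁆⁆ := by
  have hPm_mem : ∀ z ∈ m, Pm z = z := by
    intro z hz
    simp [hPm, Submodule.linearProjOfIsCompl, Submodule.projection_apply_of_mem_left hc.symm hz]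
  have hPm_h : ∀ z ∈ h, Pm z = 0 := by
    intro z hz
    simp [hPm, Submodule.linearProjOfIsCompl, Submodule.projectionOnto_apply_of_mem_right (p := m) (q := h.toSubmodule) hc.symm hz]
  have hPh_mem : ∀ z, Ph z ∈ h := by
    intro z; rw [hPh]; exact (Submodule.linearProjOfIsCompl h.toSubmodule m hc z).2
  have hsum : ∀ z : g, Ph z + Pm z = z := by
    intro z
    rw [hPh, hPm]
    exact Submodule.projection_add_projection_eq_self hc z
  set A := Ph ⁅X, Y⁆ with hA
  have hAh : A ∈ h := hPh_mem _
  have key : Pm ⁅A, ⁅U, V⁆⁆ = Pm ⁅⁅A, U⁆, V⁆ + Pm ⁅U, ⁅A, V⁆⁆ := by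
    rw [← map_add]
    congr 1
    exact leibniz_lie A U V
  have split : ⁅A, ⁅U, V⁆⁆ = ⁅A, Ph ⁅U, V⁆⁆ + ⁅A, Pm ⁅U, V⁆⁆ := by
    rw [← lie_add, hsum]
  have h1 : Pm ⁅A, Ph ⁅U, V⁆⁆ = 0 := hPm_h _ (h.lie_mem hAh (hPh_mem _))
  have h2 : Pm ⁅A, Pm ⁅U, V⁆⁆ = ⁅A, Pm ⁅U, V⁆⁆ := by
    refine hPm_mem _ (hm A hAh _ ?_)
    rw [hPm]
    exact (Submodule.linearProjOfIsCompl m h.toSubmodule hc.symm ⁅U, V⁆).2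
  calc ⁅A, Pm ⁅U, V⁆⁆ = Pm ⁅A, Ph ⁅U, V⁆⁆ + Pm ⁅A, Pm ⁅U, V⁆⁆ := by rw [h1, h2, zero_add]
    _ = Pm ⁅A, ⁅U, V⁆⁆ := by rw [← map_add, ← lie_add, hsum]
    _ = _ := key
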